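/- For n ≥ 1, the set of two-term states {|j⟩ + i^ℓ |j'⟩ : j, j' ∈ {0,1}ⁿ, ℓ ∈ {0,1,2,3}} that are product states consists precisely of those pairs (j, j') with Hamming distance d_H(j,j') ≤ 1; in particular the number of unordered pairs {j,j'} with j ≠ j' giving product states is n·2^{n−1}. -/
import Mathlib


open Complex
open scoped TensorProduct PiTensorProduct

/-- The computational basis vector `|j⟩` of `(ℂ²)^⊗n` indexed by a binary string `j`. -/
noncomputable def basisVec {n : ℕ} (j : Fin n → Bool) :
    ⨂[ℂ] _ : Fin n, (Fin 2 → ℂ) :=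
  PiTensorProduct.tprod ℂ (fun i => fun k => if (k = 1) = (j i = true) then (1 : ℂ) else 0)


noncomputable def E {n : ℕ} (j : Fin n → Bool) : Fin n → (Fin 2 → ℂ) :=
  fun i => fun k => if (k = 1) = (j i = true) then (1 : ℂ) else 0

def idx (b : Bool) : Fin 2 := if b then 1 else 0

noncomputable def φ {n : ℕ} (k : Fin n → Bool) :
    (⨂[ℂ] _ : Fin n, (Fin 2 → ℂ)) →ₗ[ℂ] ℂ :=
  PiTensorProduct.lift ((MultilinearMap.mkPiAlgebra ℂ (Fin n) ℂ).compLinearMap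
    (fun i => LinearMap.proj (idx (k i))))

theorem φ_tprod {n : ℕ} (k : Fin n → Bool) (u : Fin n → (Fin 2 → ℂ)) :
    φ k (PiTensorProduct.tprod ℂ u) = ∏ i, u i (idx (k i)) := by
  simp [φ, PiTensorProduct.lift.tprod, MultilinearMap.compLinearMap_apply,
    MultilinearMap.mkPiAlgebra_apply]

theorem E_idx {n : ℕ} (j k : Fin n → Bool) (i : Fin n) :
    E j i (idx (k i)) = if k i = j i then 1 else 0 := by
  cases h : j i <;> cases h' : k i <;> simp [E, idx, h, h'] <;> decide

noncomputable def bV {n : ℕ} (j : Fin n → Bool) := PiTensorProduct.tprod ℂ (E j)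

theorem φ_bV {n : ℕ} (k j : Fin n → Bool) :
    φ k (bV j) = if k = j then 1 else 0 := by
  rw [bV, φ_tprod]
  have : ∀ i, E j i (idx (k i)) = if k i = j i then (1:ℂ) else 0 := E_idx j k
  simp_rw [this, Finset.prod_boole]
  congr 1
  simp [funext_iff, eq_iff_iff]

theorem back {n : ℕ} (hn : 1 ≤ n) (j j' : Fin n → Bool) (c : ℂ)
    (h : hammingDist j j' ≤ 1) :
    ∃ u : Fin n → (Fin 2 → ℂ), bV j + c • bV j' = PiTensorProduct.tprod ℂ u := by
  -- find i0 such that j and j' agree off i0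
  obtain ⟨i0, hi0⟩ : ∃ i0 : Fin n, ∀ i, i ≠ i0 → j i = j' i := by
    unfold hammingDist at h
    interval_cases h' : (Finset.univ.filter fun i => j i ≠ j' i).card
    · refine ⟨⟨0, hn⟩, fun i _ => ?_⟩
      by_contra hne
      have : i ∈ Finset.univ.filter fun i => j i ≠ j' i := by simp [hne]
      simp [Finset.card_eq_zero.mp h'] at this
    · obtain ⟨a, ha⟩ := Finset.card_eq_one.mp h'
      refine ⟨a, fun i hia => ?_⟩
      by_contra hne
      have : i ∈ Finset.univ.filter fun i => j i ≠ j' i := by simp [hne]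
      rw [ha] at this
      exact hia (Finset.mem_singleton.mp this)
  refine ⟨Function.update (E j) i0 (E j i0 + c • E j' i0), ?_⟩
  have hupdate : Function.update (E j) i0 (E j' i0) = E j' := by
    funext i
    rcases eq_or_ne i i0 with rfl | hne
    · simp
    · rw [Function.update_of_ne hne]
      funext k
      simp only [E, hi0 i hne]
  rw [MultilinearMap.map_update_add, MultilinearMap.map_update_smul, Function.update_eq_self, hupdate]
  rfl

theorem fwd {n : ℕ} (j j' : Fin n → Bool) (c : ℂ) (hc : c ≠ 0)
    (h2 : 2 ≤ hammingDist j j') :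
    ¬ ∃ u : Fin n → (Fin 2 → ℂ), bV j + c • bV j' = PiTensorProduct.tprod ℂ u := by
  rintro ⟨u, hu⟩
  unfold hammingDist at h2
  obtain ⟨i1, hi1, i2, hi2, h12⟩ := Finset.one_lt_card.mp (lt_of_lt_of_le one_lt_two h2)
  simp only [Finset.mem_filter] at hi1 hi2
  have hj1 : j i1 ≠ j' i1 := hi1.2
  have hj2 : j i2 ≠ j' i2 := hi2.2
  set k1 := Function.update j i1 (j' i1) with hk1
  set k2 := Function.update j' i1 (j i1) with hk2
  have hφ : ∀ k : Fin n → Bool,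
      φ k (bV j + c • bV j') = (if k = j then 1 else 0) + c * (if k = j' then 1 else 0) := by
    intro k
    simp [φ_bV, smul_eq_mul]
  have hk1j : k1 ≠ j := fun h => hj1 (by have := congrFun h i1; simpa [hk1] using this.symm)
  have hk1j' : k1 ≠ j' := fun h => hj2 (by
    have := congrFun h i2
    simpa [hk1, Function.update_of_ne (Ne.symm h12)] using this)
  have hk2j' : k2 ≠ j' := fun h => hj1 (by have := congrFun h i1; simpa [hk2] using this)
  have hk2j : k2 ≠ j := fun h => hj2 (by
    have := congrFun h i2
    simpa [hk2, Function.update_of_ne (Ne.symm h12)] using this.symm)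
  have hjj' : j ≠ j' := fun h => hj1 (congrFun h i1)
  have e1 : φ k1 (bV j + c • bV j') = 0 := by rw [hφ]; simp [hk1j, hk1j']
  have e2 : φ k2 (bV j + c • bV j') = 0 := by rw [hφ]; simp [hk2j, hk2j']
  have e3 : φ j (bV j + c • bV j') = 1 := by rw [hφ]; simp [hjj']
  have e4 : φ j' (bV j + c • bV j') = c := by rw [hφ]; simp [Ne.symm hjj']
  have key : φ k1 (bV j + c • bV j') * φ k2 (bV j + c • bV j')
      = φ j (bV j + c • bV j') * φ j' (bV j + c • bV j') := by
    rw [hu, φ_tprod, φ_tprod, φ_tprod, φ_tprod, ← Finset.prod_mul_distrib,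
      ← Finset.prod_mul_distrib]
    refine Finset.prod_congr rfl fun i _ => ?_
    rcases eq_or_ne i i1 with rfl | hne
    · simp [hk1, hk2, mul_comm]
    · simp [hk1, hk2, Function.update_of_ne hne]
  rw [e1, e2, e3, e4] at key
  simp at key
  exact hc key.symm


def cntEquiv (n : ℕ) : {p : Fin n × (Fin n → Bool) // p.2 p.1 = false} ≃
    (i : Fin n) × ({x : Fin n // x ≠ i} → Bool) where
  toFun p := ⟨p.1.1, fun x => p.1.2 x.1⟩
  invFun q := ⟨(q.1, fun x => if h : x = q.1 then false else q.2 ⟨x, h⟩), by simp⟩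
  left_inv p := by
    obtain ⟨⟨i, j⟩, hp⟩ := p
    apply Subtype.ext
    refine Prod.ext rfl ?_
    funext x
    by_cases h : x = i
    · subst h; simpa using hp.symm
    · simp [h]
  right_inv q := by
    obtain ⟨i, f⟩ := q
    refine Sigma.ext rfl (heq_of_eq ?_)
    funext x
    simp [x.2]

theorem cnt_card (n : ℕ) :
    Fintype.card {p : Fin n × (Fin n → Bool) // p.2 p.1 = false} = n * 2 ^ (n - 1) := by
  rw [Fintype.card_congr (cntEquiv n), Fintype.card_sigma]
  have : ∀ i : Fin n, Fintype.card ({x : Fin n // x ≠ i} → Bool) = 2 ^ (n - 1) := by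
    intro i
    rw [Fintype.card_fun, Fintype.card_bool]
    congr 1
    simpa using Set.card_ne_eq i
  simp [this, Finset.sum_const, Fintype.card_fin]

theorem hd_update {n : ℕ} (j : Fin n → Bool) (i : Fin n) (h : j i = false) :
    hammingDist j (Function.update j i true) = 1 := by
  unfold hammingDist
  rw [Finset.card_eq_one]
  refine ⟨i, ?_⟩
  ext x
  simp only [Finset.mem_filter, Finset.mem_univ, true_and, Finset.mem_singleton]
  constructor
  · intro hx
    by_contra hxi
    exact hx (by rw [Function.update_of_ne hxi])
  · rintro rfl
    simp [h]

theorem set_eq (n : ℕ) :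
    {e : Sym2 (Fin n → Bool) | ∃ j j' : Fin n → Bool,
        e = s(j, j') ∧ j ≠ j' ∧ hammingDist j j' = 1} =
      (fun p : Fin n × (Fin n → Bool) => s(p.2, Function.update p.2 p.1 true)) ''
        {p | p.2 p.1 = false} := by
  ext e
  simp only [Set.mem_setOf_eq, Set.mem_image]
  constructor
  · rintro ⟨j, j', rfl, hne, hd⟩
    unfold hammingDist at hd
    obtain ⟨i, hi⟩ := Finset.card_eq_one.mp hd
    have hmem : ∀ x, j x ≠ j' x ↔ x = i := by
      intro x
      rw [← Finset.mem_singleton, ← hi]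
      simp
    have hoff : ∀ x, x ≠ i → j x = j' x := fun x hx => by
      by_contra hc; exact hx ((hmem x).mp hc)
    have hii : j i ≠ j' i := (hmem i).mpr rfl
    cases hji : j i
    · refine ⟨(i, j), hji, ?_⟩
      have : j' = Function.update j i true := by
        funext x
        rcases eq_or_ne x i with rfl | hx
        · rw [Function.update_self]
          cases hx' : j' x
          · rw [hji, hx'] at hii; exact absurd rfl hii
          · rfl
        · rw [Function.update_of_ne hx, hoff x hx]
      rw [this]
    · refine ⟨(i, j'), ?_, ?_⟩
      · cases hx' : j' i
        · exact hx'
        · rw [hji, hx'] at hii; exact absurd rfl hii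
      · have : j = Function.update j' i true := by
          funext x
          rcases eq_or_ne x i with rfl | hx
          · rw [Function.update_self, hji]
          · rw [Function.update_of_ne hx, hoff x hx]
        simp only
        rw [← this, Sym2.eq_swap]
  · rintro ⟨⟨i, j⟩, hp, rfl⟩
    simp only [Set.mem_setOf_eq] at hp
    refine ⟨j, Function.update j i true, rfl, ?_, hd_update j i hp⟩
    intro h
    have := congrFun h i
    rw [Function.update_self, hp] at this
    exact Bool.false_ne_true this

theorem inj_on (n : ℕ) :
    Set.InjOn (fun p : Fin n × (Fin n → Bool) => s(p.2, Function.update p.2 p.1 true))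
      {p | p.2 p.1 = false} := by
  rintro ⟨i, j⟩ hp ⟨i', j'⟩ hq h
  simp only [Set.mem_setOf_eq] at hp hq
  simp only [Sym2.eq, Sym2.rel_iff', Prod.mk.injEq, Prod.swap_prod_mk] at h
  rcases h with ⟨rfl, h2⟩ | ⟨rfl, h2⟩
  · -- j = j', updates equal ⇒ i = i'
    have := congrFun h2 i
    rw [Function.update_self] at this
    rcases eq_or_ne i i' with rfl | hne
    · rfl
    · rw [Function.update_of_ne hne, hp] at this
      exact absurd this.symm Bool.false_ne_true
  · -- cross case: contradiction
    exfalso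
    rcases eq_or_ne i' i with rfl | hne
    · rw [Function.update_self] at hp
      simp at hp
    · have h3 := congrFun h2 i'
      rw [Function.update_of_ne hne, Function.update_self] at h3
      rw [← h3] at hq
      simp at hq

theorem part2 (n : ℕ) :
    {e : Sym2 (Fin n → Bool) | ∃ j j' : Fin n → Bool,
        e = s(j, j') ∧ j ≠ j' ∧ hammingDist j j' = 1}.ncard = n * 2 ^ (n - 1) := by
  rw [set_eq n, Set.ncard_image_of_injOn (inj_on n)]
  rw [Set.ncard_eq_toFinset_card', Set.toFinset_card]
  exact cnt_card n

/-- A vector of `(ℂ²)^⊗n` is a product state if it is an elementary tensor. -/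
def IsProductState {n : ℕ} (v : ⨂[ℂ] _ : Fin n, (Fin 2 → ℂ)) : Prop :=
  ∃ u : Fin n → (Fin 2 → ℂ), v = PiTensorProduct.tprod ℂ u

/-- Among the two-term states `|j⟩ + i^ℓ |j'⟩`, the product states are exactly those
with Hamming distance `d_H(j,j') ≤ 1`; the number of unordered pairs `{j,j'}` with
`j ≠ j'` giving product states is `n·2^{n−1}`. -/
theorem product_two_term_states (n : ℕ) (hn : 1 ≤ n) :
    (∀ (j j' : Fin n → Bool) (ℓ : Fin 4),
      IsProductState (basisVec j + (I : ℂ) ^ (ℓ : ℕ) • basisVec j')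
        ↔ hammingDist j j' ≤ 1) ∧
    {e : Sym2 (Fin n → Bool) | ∃ j j' : Fin n → Bool,
        e = s(j, j') ∧ j ≠ j' ∧ hammingDist j j' = 1}.ncard = n * 2 ^ (n - 1) := by
  constructor
  · intro j j' ℓ
    constructor
    · intro h
      by_contra hle
      exact fwd j j' _ (pow_ne_zero _ I_ne_zero) (by omega) h
    · intro h
      exact back hn j j' _ h
  · exact part2 n
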